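/- Let k_q, k_ω, C_ω > 0 and 0 < β < min{√k_q, 4 k_q k_ω/(4 k_q + (k_ω + C_ω)²)}. Then the matrices N_{q1} = [[k_q, −β],[−β, 1]] and W_q = [[β k_q, −β(k_ω + C_ω)/2],[−β(k_ω + C_ω)/2, k_ω − β]] are both positive definite. -/

import Mathlib

lemma posdef_2x2 (a b c : ℝ) (ha : 0 < a) (hd : 0 < a * c - b * b) :
    (!![a, b; b, c] : Matrix (Fin 2) (Fin 2) ℝ).PosDef := by
  have hc : 0 < c := by nlinarith [sq_nonneg b]
  rw [Matrix.posDef_iff_dotProduct_mulVec]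
  constructor
  · ext i j
    fin_cases i <;> fin_cases j <;>
      simp [Matrix.conjTranspose, Matrix.vecHead, Matrix.vecTail]
  · intro x hx
    have h01 : x 0 ≠ 0 ∨ x 1 ≠ 0 := by
      by_contra h
      push_neg at h
      exact hx (funext fun i => by fin_cases i <;> simp [h.1, h.2])
    simp [Matrix.mulVec, dotProduct, Fin.sum_univ_two]
    rcases h01 with h | h
    · nlinarith [sq_nonneg (b * x 0 + c * x 1), mul_pos hd (mul_self_pos.mpr h)]
    · nlinarith [sq_nonneg (a * x 0 + b * x 1), mul_pos hd (mul_self_pos.mpr h)]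

/-- For `k_q, k_ω, C_ω > 0` and `0 < β < min{√k_q, 4 k_q k_ω/(4 k_q + (k_ω + C_ω)²)}`,
the matrices `N_q1 = [[k_q, −β],[−β, 1]]` and
`W_q = [[β k_q, −β(k_ω + C_ω)/2],[−β(k_ω + C_ω)/2, k_ω − β]]` are positive definite. -/
theorem cable_direction_lyapunov_matrices_posDef (kq kω Cω β : ℝ)
    (hkq : 0 < kq) (hkω : 0 < kω) (hCω : 0 < Cω) (hβ0 : 0 < β)
    (hβ : β < min (Real.sqrt kq) (4 * kq * kω / (4 * kq + (kω + Cω) ^ 2))) :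
    (!![kq, -β; -β, 1] : Matrix (Fin 2) (Fin 2) ℝ).PosDef ∧
      (!![β * kq, -(β * (kω + Cω)) / 2; -(β * (kω + Cω)) / 2, kω - β] :
        Matrix (Fin 2) (Fin 2) ℝ).PosDef := by
  have h1 : β < Real.sqrt kq := lt_of_lt_of_le hβ (min_le_left _ _)
  have h2 : β < 4 * kq * kω / (4 * kq + (kω + Cω) ^ 2) :=
    lt_of_lt_of_le hβ (min_le_right _ _)
  have hsq : β ^ 2 < kq := (Real.lt_sqrt hβ0.le).mp h1
  have hden : 0 < 4 * kq + (kω + Cω) ^ 2 := by positivity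
  have h2' : β * (4 * kq + (kω + Cω) ^ 2) < 4 * kq * kω := (lt_div_iff₀ hden).mp h2
  refine ⟨posdef_2x2 _ _ _ hkq (by nlinarith), posdef_2x2 _ _ _ (by positivity) ?_⟩
  nlinarith [sq_nonneg (kω + Cω), mul_pos hβ0 hkq]
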